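/- arXiv:2210.04983 — 5 statements merged into one kernel-verified Lean document; each statement's English description precedes it below -/
import Mathlib

section
/- Let ζ, ξ > 0 and define h₂ : ℝ → ℝ∪{+∞} by h₂(u) = 0 for u < 0, h₂(u) = u²/(ζ − ξu) for 0 ≤ u < ζ/ξ, and h₂(u) = +∞ otherwise. Then the Legendre–Fenchel transform h₂*(γ) = sup_u (γu − h₂(u)) satisfies h₂*(γ) = +∞ for γ < 0 and h₂*(γ) = (ζγ²/2)·(1 + ξγ/2 + √(ξγ+1))⁻¹ for γ ≥ 0. -/
open scoped EReal

noncomputable def h2fun (ζ ξ : ℝ) : ℝ → EReal := fun u =>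
  if u < 0 then (0 : EReal)
  else if u < ζ / ξ then ((u ^ 2 / (ζ - ξ * u) : ℝ) : EReal)
  else (⊤ : EReal)

theorem h2_legendre_transform (ζ ξ : ℝ) (hζ : 0 < ζ) (hξ : 0 < ξ) :
    (∀ γ : ℝ, γ < 0 → (⨆ u : ℝ, (((γ * u : ℝ) : EReal) - h2fun ζ ξ u)) = ⊤) ∧
    (∀ γ : ℝ, 0 ≤ γ → (⨆ u : ℝ, (((γ * u : ℝ) : EReal) - h2fun ζ ξ u)) =
      ((ζ * γ ^ 2 / 2 * (1 + ξ * γ / 2 + Real.sqrt (ξ * γ + 1))⁻¹ : ℝ) : EReal)) := by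
  have hζξ : 0 < ζ / ξ := div_pos hζ hξ
  constructor
  · intro γ hγ
    rw [iSup_eq_top]
    intro b hb
    induction b using EReal.rec with
    | bot =>
      refine ⟨-1, ?_⟩
      have h1 : h2fun ζ ξ (-1) = 0 := by
        simp [h2fun]
      rw [h1, sub_zero]
      exact bot_lt_iff_ne_bot.mpr (EReal.coe_ne_bot _)
    | coe x =>
      set u : ℝ := min ((x + 1) / γ) (-1) with hu
      refine ⟨u, ?_⟩
      have hune : u < 0 := lt_of_le_of_lt (min_le_right _ _) (by norm_num)
      have h1 : h2fun ζ ξ u = 0 := by simp [h2fun, hune]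
      rw [h1, sub_zero]
      have hle : u ≤ (x + 1) / γ := min_le_left _ _
      have hγ' : γ ≠ 0 := ne_of_lt hγ
      have : x + 1 ≤ γ * u := by
        have := mul_le_mul_of_nonpos_left hle (le_of_lt hγ)
        rwa [mul_div_cancel₀ _ hγ'] at this
      have : x < γ * u := by linarith
      exact_mod_cast this
    | top => exact absurd hb (lt_irrefl _)
  · intro γ hγ
    set s : ℝ := Real.sqrt (ξ * γ + 1) with hs
    have hξγ : 0 ≤ ξ * γ := mul_nonneg hξ.le hγ
    have hs2 : s ^ 2 = ξ * γ + 1 := Real.sq_sqrt (by linarith)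
    have hs1 : 1 ≤ s := by
      nlinarith [Real.sqrt_nonneg (ξ * γ + 1)]
    have hspos : 0 < s := by linarith
    set M : ℝ := ζ * (s - 1) ^ 2 / ξ ^ 2 with hM
    have hMnn : 0 ≤ M := by positivity
    have hMval : M * ξ ^ 2 = ζ * (s - 1) ^ 2 := by
      rw [hM]; field_simp
    have hRHS : ζ * γ ^ 2 / 2 * (1 + ξ * γ / 2 + s)⁻¹ = M := by
      have hden : 1 + ξ * γ / 2 + s = (s + 1) ^ 2 / 2 := by nlinarith
      rw [hden, hM]
      have h1 : γ * ξ = (s - 1) * (s + 1) := by nlinarith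
      have hξ' : (ξ : ℝ) ≠ 0 := hξ.ne'
      have hs1' : (s + 1 : ℝ) ≠ 0 := by positivity
      field_simp
      linear_combination (γ * ξ + (s - 1) * (s + 1)) * h1
    rw [hRHS]
    apply le_antisymm
    · apply iSup_le
      intro u
      unfold h2fun
      by_cases h1 : u < 0
      · simp only [h1, if_true]
        rw [sub_zero]
        have : γ * u ≤ M := by nlinarith
        exact_mod_cast this
      · push_neg at h1
        by_cases h2 : u < ζ / ξ
        · simp only [if_neg (not_lt.mpr h1), if_pos h2]
          rw [← EReal.coe_sub]
          have ht : 0 < ζ - ξ * u := by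
            have := (lt_div_iff₀ hξ).mp h2
            nlinarith
          have id : u ^ 2 * ξ ^ 2 - (γ * u - M) * (ζ - ξ * u) * ξ ^ 2
              = (s * (ζ - ξ * u) - ζ) ^ 2 := by
            linear_combination ((ζ - ξ * u) * ζ - (ζ - ξ * u) ^ 2) * hs2
              + (ζ - ξ * u) * hMval
          have expand : (γ * u - M) * (ζ - ξ * u) ≤ u ^ 2 := by
            nlinarith [sq_nonneg (s * (ζ - ξ * u) - ζ), sq_nonneg ξ, id,
              mul_pos hξ hξ]
          have key : γ * u - u ^ 2 / (ζ - ξ * u) ≤ M := by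
            have := (le_div_iff₀ ht).mpr expand
            linarith
          exact_mod_cast key
        · simp only [if_neg (not_lt.mpr h1), if_neg h2]
          rw [EReal.sub_top]
          exact bot_le
    · set u : ℝ := ζ * (s - 1) / (ξ * s) with huep
      have hu0 : 0 ≤ u := div_nonneg (by nlinarith) (by positivity)
      have hult : u < ζ / ξ := by
        rw [div_lt_div_iff₀ (by positivity) hξ]
        nlinarith
      have hsne : s ≠ 0 := hspos.ne'
      have hξ' : (ξ : ℝ) ≠ 0 := hξ.ne'
      have hden : ζ - ξ * u = ζ / s := by
        field_simp [huep]
        rw [huep]; field_simp; ring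
      have hval : γ * u - u ^ 2 / (ζ - ξ * u) = M := by
        rw [hden, huep, hM]
        field_simp
        linear_combination (-(s - 1)) * hs2
      have hfu : ((γ * u : ℝ) : EReal) - h2fun ζ ξ u = ((M : ℝ) : EReal) := by
        unfold h2fun
        rw [if_neg (not_lt.mpr hu0), if_pos hult, ← EReal.coe_sub, hval]
      calc ((M : ℝ) : EReal) = ((γ * u : ℝ) : EReal) - h2fun ζ ξ u := hfu.symm
        _ ≤ _ := le_iSup (fun u => (((γ * u : ℝ) : EReal) - h2fun ζ ξ u)) u
end

section
/- In the setting of an irreducible Markov generator W on finite E with stationary π, rates w_{xy}, weights a_{xy}, c = max|a_{xy}|, q = max_x w_{xx}, and ⟨a²⟩_π = Σ_{x≠y} π_x w_{xy} a_{xy}², the operator B^{(k)} f(x) = Σ_{y≠x} a_{xy}^k w_{xy} f(y) applied to the constant function 1 satisfies ‖B^{(k)} 1‖_π ≤ ⟨a²⟩_π^{1/2} q^{1/2} c^{k−1} for every k ≥ 1, and the same bound holds for the ℓ²(π)-adjoint: ‖(B^{(k)})† 1‖_π ≤ ⟨a²⟩_π^{1/2} q^{1/2} c^{k−1}. -/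
open Finset

private lemma key_cs {E : Type*} (s : Finset E) (μ b : E → ℝ) (c : ℝ)
    (hμ : ∀ y ∈ s, 0 ≤ μ y) (hb : ∀ y ∈ s, |b y| ≤ c) (k : ℕ) (hk : 1 ≤ k) :
    (∑ y ∈ s, μ y * b y ^ k) ^ 2
      ≤ (∑ y ∈ s, μ y) * (c ^ (k - 1)) ^ 2 * ∑ y ∈ s, μ y * b y ^ 2 := by
  have h1 : (∑ y ∈ s, μ y * b y ^ k) ^ 2
      ≤ (∑ y ∈ s, μ y) * ∑ y ∈ s, μ y * (b y ^ k) ^ 2 := by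
    have := Finset.sum_mul_sq_le_sq_mul_sq s (fun y => Real.sqrt (μ y))
      (fun y => Real.sqrt (μ y) * b y ^ k)
    calc (∑ y ∈ s, μ y * b y ^ k) ^ 2
        = (∑ y ∈ s, Real.sqrt (μ y) * (Real.sqrt (μ y) * b y ^ k)) ^ 2 := by
          congr 1; apply Finset.sum_congr rfl; intro y hy
          rw [← mul_assoc, Real.mul_self_sqrt (hμ y hy)]
      _ ≤ (∑ y ∈ s, Real.sqrt (μ y) ^ 2) * ∑ y ∈ s, (Real.sqrt (μ y) * b y ^ k) ^ 2 := this
      _ = (∑ y ∈ s, μ y) * ∑ y ∈ s, μ y * (b y ^ k) ^ 2 := by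
          congr 1
          · apply Finset.sum_congr rfl; intro y hy; exact Real.sq_sqrt (hμ y hy)
          · apply Finset.sum_congr rfl; intro y hy
            rw [mul_pow, Real.sq_sqrt (hμ y hy)]
  have h2 : ∑ y ∈ s, μ y * (b y ^ k) ^ 2
      ≤ (c ^ (k - 1)) ^ 2 * ∑ y ∈ s, μ y * b y ^ 2 := by
    rw [Finset.mul_sum]
    apply Finset.sum_le_sum
    intro y hy
    have hb2 : b y ^ 2 ≤ c ^ 2 := sq_le_sq' (neg_le_of_abs_le (hb y hy)) (le_of_abs_le (hb y hy))
    have : (b y ^ k) ^ 2 = b y ^ 2 * (b y ^ 2) ^ (k - 1) := by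
      rw [← pow_mul, ← pow_mul, ← pow_add]
      congr 1
      omega
    rw [this]
    have hpow : (b y ^ 2) ^ (k - 1) ≤ (c ^ 2) ^ (k - 1) :=
      pow_le_pow_left₀ (sq_nonneg _) hb2 _
    calc μ y * (b y ^ 2 * (b y ^ 2) ^ (k - 1))
        ≤ μ y * (b y ^ 2 * (c ^ 2) ^ (k - 1)) := by
          apply mul_le_mul_of_nonneg_left _ (hμ y hy)
          exact mul_le_mul_of_nonneg_left hpow (sq_nonneg _)
      _ = (c ^ (k - 1)) ^ 2 * (μ y * b y ^ 2) := by
          rw [← pow_mul, ← pow_mul, mul_comm (k-1) 2, pow_mul]; ring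
  calc (∑ y ∈ s, μ y * b y ^ k) ^ 2
      ≤ (∑ y ∈ s, μ y) * ∑ y ∈ s, μ y * (b y ^ k) ^ 2 := h1
    _ ≤ (∑ y ∈ s, μ y) * ((c ^ (k - 1)) ^ 2 * ∑ y ∈ s, μ y * b y ^ 2) := by
        apply mul_le_mul_of_nonneg_left h2
        exact Finset.sum_nonneg hμ
    _ = (∑ y ∈ s, μ y) * (c ^ (k - 1)) ^ 2 * ∑ y ∈ s, μ y * b y ^ 2 := by ring

/-- `‖B^{(k)} 1‖_π ≤ ⟨a²⟩_π^{1/2} q^{1/2} c^{k−1}` and the same bound for the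
`ℓ²(π)`-adjoint applied to the constant function `1`. -/
theorem Bk_one_norm_bound {E : Type*} [Fintype E] [DecidableEq E] [Nonempty E]
    (w : E → E → ℝ) (π : E → ℝ) (a : E → E → ℝ) (c q : ℝ) (k : ℕ) (hk : 1 ≤ k)
    (hw : ∀ x y, x ≠ y → 0 ≤ w x y)
    (hdiag : ∀ x, w x x = ∑ y ∈ univ.filter (fun y => y ≠ x), w x y)
    (hπpos : ∀ x, 0 < π x) (hπ1 : ∑ x, π x = 1)
    (hstat : ∀ y, ∑ x ∈ univ.filter (fun x => x ≠ y), π x * w x y = π y * w y y)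
    (hc : IsGreatest {r : ℝ | ∃ x y, x ≠ y ∧ r = |a x y|} c)
    (hq : IsGreatest (Set.range fun x => w x x) q) :
    Real.sqrt (∑ x, π x * (∑ y ∈ univ.filter (fun y => y ≠ x), a x y ^ k * w x y) ^ 2)
      ≤ Real.sqrt (∑ x, ∑ y ∈ univ.filter (fun y => y ≠ x), π x * w x y * a x y ^ 2) *
        Real.sqrt q * c ^ (k - 1) ∧
    Real.sqrt (∑ x, π x *
        (∑ y ∈ univ.filter (fun y => y ≠ x), (π y / π x) * w y x * a y x ^ k) ^ 2)
      ≤ Real.sqrt (∑ x, ∑ y ∈ univ.filter (fun y => y ≠ x), π x * w x y * a x y ^ 2) *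
        Real.sqrt q * c ^ (k - 1) := by
  set A : ℝ := ∑ x, ∑ y ∈ univ.filter (fun y => y ≠ x), π x * w x y * a x y ^ 2 with hA
  -- basic positivity facts
  have hc0 : 0 ≤ c := by
    obtain ⟨x, y, hxy, hcv⟩ := hc.1
    rw [hcv]; exact abs_nonneg _
  have hwdiag_nonneg : ∀ x, 0 ≤ w x x := by
    intro x
    rw [hdiag x]
    exact Finset.sum_nonneg fun y hy => hw x y (Ne.symm (mem_filter.mp hy).2)
  have hq0 : 0 ≤ q := by
    obtain ⟨x, hx⟩ := hq.1
    rw [← hx]; exact hwdiag_nonneg x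
  have hA0 : 0 ≤ A := by
    apply Finset.sum_nonneg; intro x _
    apply Finset.sum_nonneg; intro y hy
    have := hw x y (Ne.symm (mem_filter.mp hy).2)
    have := (hπpos x).le
    positivity
  have hwq : ∀ x, w x x ≤ q := fun x => hq.2 ⟨x, rfl⟩
  have habs : ∀ x y, x ≠ y → |a x y| ≤ c := fun x y hxy => hc.2 ⟨x, y, hxy, rfl⟩
  have hC0 : (0:ℝ) ≤ (c ^ (k-1)) ^ 2 := sq_nonneg _
  -- the RHS as a single sqrt
  have hrhs : Real.sqrt A * Real.sqrt q * c ^ (k - 1)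
      = Real.sqrt (A * q * (c ^ (k - 1)) ^ 2) := by
    rw [Real.sqrt_mul (by positivity), Real.sqrt_mul hA0, Real.sqrt_sq (by positivity)]
  constructor
  · rw [hrhs]
    apply Real.sqrt_le_sqrt
    calc ∑ x, π x * (∑ y ∈ univ.filter (fun y => y ≠ x), a x y ^ k * w x y) ^ 2
        ≤ ∑ x, q * (c ^ (k-1)) ^ 2 *
            (∑ y ∈ univ.filter (fun y => y ≠ x), π x * w x y * a x y ^ 2) := by
          apply Finset.sum_le_sum
          intro x _
          have hkey := key_cs (univ.filter (fun y => y ≠ x)) (fun y => w x y)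
            (fun y => a x y) c (fun y hy => hw x y (Ne.symm (mem_filter.mp hy).2))
            (fun y hy => habs x y (Ne.symm (mem_filter.mp hy).2)) k hk
          have hterm : (∑ y ∈ univ.filter (fun y => y ≠ x), a x y ^ k * w x y) ^ 2
              = (∑ y ∈ univ.filter (fun y => y ≠ x), w x y * a x y ^ k) ^ 2 := by
            congr 1; apply Finset.sum_congr rfl; intro y _; ring
          have hS0 : 0 ≤ ∑ y ∈ univ.filter (fun y => y ≠ x), w x y * a x y ^ 2 :=
            Finset.sum_nonneg fun y hy => by
              have := hw x y (Ne.symm (mem_filter.mp hy).2); positivity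
          calc π x * (∑ y ∈ univ.filter (fun y => y ≠ x), a x y ^ k * w x y) ^ 2
              ≤ π x * ((∑ y ∈ univ.filter (fun y => y ≠ x), w x y) * (c ^ (k-1)) ^ 2 *
                  ∑ y ∈ univ.filter (fun y => y ≠ x), w x y * a x y ^ 2) := by
                rw [hterm]
                exact mul_le_mul_of_nonneg_left hkey (hπpos x).le
            _ ≤ π x * (q * (c ^ (k-1)) ^ 2 *
                  ∑ y ∈ univ.filter (fun y => y ≠ x), w x y * a x y ^ 2) := by
                apply mul_le_mul_of_nonneg_left _ (hπpos x).le
                apply mul_le_mul_of_nonneg_right _ hS0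
                apply mul_le_mul_of_nonneg_right _ hC0
                rw [← hdiag x]; exact hwq x
            _ = q * (c ^ (k-1)) ^ 2 *
                  (∑ y ∈ univ.filter (fun y => y ≠ x), π x * w x y * a x y ^ 2) := by
                simp only [Finset.mul_sum]
                apply Finset.sum_congr rfl; intro y _; ring
      _ = A * q * (c ^ (k-1)) ^ 2 := by
          rw [hA, ← Finset.mul_sum]; ring
  · rw [hrhs]
    apply Real.sqrt_le_sqrt
    have hswap : ∑ x, ∑ y ∈ univ.filter (fun y => y ≠ x), π y * w y x * a y x ^ 2 = A := by
      rw [hA]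
      simp only [Finset.sum_filter]
      rw [Finset.sum_comm]
      apply Finset.sum_congr rfl; intro x _
      apply Finset.sum_congr rfl; intro y _
      by_cases h : x ≠ y
      · simp [h, h.symm]
      · push_neg at h; subst h; simp
    calc ∑ x, π x * (∑ y ∈ univ.filter (fun y => y ≠ x), (π y / π x) * w y x * a y x ^ k) ^ 2
        ≤ ∑ x, q * (c ^ (k-1)) ^ 2 *
            (∑ y ∈ univ.filter (fun y => y ≠ x), π y * w y x * a y x ^ 2) := by
          apply Finset.sum_le_sum
          intro x _
          have hμnn : ∀ y ∈ univ.filter (fun y => y ≠ x), 0 ≤ (π y / π x) * w y x := by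
            intro y hy
            have := hw y x (mem_filter.mp hy).2
            have := (hπpos y).le
            have := (hπpos x).le
            positivity
          have hkey := key_cs (univ.filter (fun y => y ≠ x))
            (fun y => (π y / π x) * w y x) (fun y => a y x) c hμnn
            (fun y hy => habs y x (mem_filter.mp hy).2) k hk
          have hsum_mu : ∑ y ∈ univ.filter (fun y => y ≠ x), (π y / π x) * w y x
              = w x x := by
            have : ∑ y ∈ univ.filter (fun y => y ≠ x), (π y / π x) * w y x
                = (∑ y ∈ univ.filter (fun y => y ≠ x), π y * w y x) / π x := by
              rw [Finset.sum_div]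
              apply Finset.sum_congr rfl; intro y _; ring
            rw [this, hstat x, mul_comm, mul_div_assoc, div_self (hπpos x).ne', mul_one]
          have hkey2 : (∑ y ∈ univ.filter (fun y => y ≠ x), (π y / π x) * w y x * a y x ^ k) ^ 2
              ≤ w x x * (c ^ (k-1)) ^ 2 *
                  ∑ y ∈ univ.filter (fun y => y ≠ x), (π y / π x) * w y x * a y x ^ 2 := by
            rw [← hsum_mu]; exact hkey
          have hS0 : 0 ≤ ∑ y ∈ univ.filter (fun y => y ≠ x),
              (π y / π x) * w y x * a y x ^ 2 :=
            Finset.sum_nonneg fun y hy => by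
              have := hμnn y hy; positivity
          calc π x * (∑ y ∈ univ.filter (fun y => y ≠ x),
                  (π y / π x) * w y x * a y x ^ k) ^ 2
              ≤ π x * (w x x * (c ^ (k-1)) ^ 2 *
                  ∑ y ∈ univ.filter (fun y => y ≠ x), (π y / π x) * w y x * a y x ^ 2) :=
                mul_le_mul_of_nonneg_left hkey2 (hπpos x).le
            _ ≤ π x * (q * (c ^ (k-1)) ^ 2 *
                  ∑ y ∈ univ.filter (fun y => y ≠ x), (π y / π x) * w y x * a y x ^ 2) := by
                apply mul_le_mul_of_nonneg_left _ (hπpos x).le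
                apply mul_le_mul_of_nonneg_right _ hS0
                exact mul_le_mul_of_nonneg_right (hwq x) hC0
            _ = q * (c ^ (k-1)) ^ 2 *
                  ∑ y ∈ univ.filter (fun y => y ≠ x), π y * w y x * a y x ^ 2 := by
                simp only [Finset.mul_sum]
                apply Finset.sum_congr rfl; intro y _
                rw [show π x * (q * (c ^ (k-1)) ^ 2 * ((π y / π x) * w y x * a y x ^ 2))
                    = (π y / π x * π x) * (q * (c ^ (k-1)) ^ 2 * (w y x * a y x ^ 2)) by ring,
                  div_mul_cancel₀ _ (hπpos x).ne']
                ring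
      _ = A * q * (c ^ (k-1)) ^ 2 := by
          rw [← Finset.mul_sum, hswap]; ring
end

section
/- For every integer k ≥ 3, the combinatorial sum Σ_{p=1}^{k} (1/p) · #{(ν₁,...,ν_p, μ₁,...,μ_p) : ν_i ≥ 1 integers with ν₁+...+ν_p = k, μ_j ≥ 0 integers with μ₁+...+μ_p = p−1} is at most 5^{k−2}. -/
open Finset

/-- Stars and bars: the number of `p`-tuples of naturals summing to `n`. -/
lemma card_tuple_sum (p n : ℕ) :
    Nat.card {f : Fin p → ℕ // ∑ i, f i = n} = (p + n - 1).choose n := by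
  rw [← Nat.card_congr (Sym.equivNatSumOfFintype (Fin p) n), Nat.card_eq_fintype_card,
    Sym.card_sym_eq_choose, Fintype.card_fin]

/-- Positive compositions shift to non-negative ones. -/
def posEquiv (p k : ℕ) (hpk : p ≤ k) :
    {f : Fin p → ℕ // (∀ i, 1 ≤ f i) ∧ ∑ i, f i = k} ≃
      {g : Fin p → ℕ // ∑ i, g i = k - p} where
  toFun f := ⟨fun i => f.1 i - 1, by
    have h0 : ∑ i, (f.1 i - 1 + 1) = k := by
      exact (Finset.sum_congr rfl fun i _ => Nat.sub_add_cancel (f.2.1 i)).trans f.2.2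
    have h1 : ∑ i : Fin p, (f.1 i - 1 + 1) = (∑ i, (f.1 i - 1)) + p := by
      rw [Finset.sum_add_distrib]
      simp
    show (∑ i, (f.1 i - 1)) = k - p
    omega⟩
  invFun g := ⟨fun i => g.1 i + 1, fun i => Nat.le_add_left 1 _, by
    rw [Finset.sum_add_distrib, g.2]
    simp only [Finset.sum_const, Finset.card_univ, Fintype.card_fin, smul_eq_mul, mul_one]
    omega⟩
  left_inv f := by
    ext i
    exact Nat.sub_add_cancel (f.2.1 i)
  right_inv g := by
    ext i
    simp

lemma card_pairs (p k : ℕ) (hp : 1 ≤ p) (hpk : p ≤ k) :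
    Nat.card {νμ : (Fin p → ℕ) × (Fin p → ℕ) //
        (∀ i, 1 ≤ νμ.1 i) ∧ (∑ i, νμ.1 i) = k ∧ (∑ i, νμ.2 i) = p - 1}
      = (k - 1).choose (p - 1) * Nat.centralBinom (p - 1) := by
  have e1 : {νμ : (Fin p → ℕ) × (Fin p → ℕ) //
        (∀ i, 1 ≤ νμ.1 i) ∧ (∑ i, νμ.1 i) = k ∧ (∑ i, νμ.2 i) = p - 1} ≃
      {νμ : (Fin p → ℕ) × (Fin p → ℕ) //
        ((∀ i, 1 ≤ νμ.1 i) ∧ (∑ i, νμ.1 i) = k) ∧ (∑ i, νμ.2 i) = p - 1} :=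
    Equiv.subtypeEquivRight fun _ => and_assoc.symm
  have e2 := e1.trans (Equiv.subtypeProdEquivProd
    (p := fun ν : Fin p → ℕ => (∀ i, 1 ≤ ν i) ∧ (∑ i, ν i) = k)
    (q := fun μ : Fin p → ℕ => (∑ i, μ i) = p - 1))
  rw [Nat.card_congr e2, Nat.card_prod, Nat.card_congr (posEquiv p k hpk), card_tuple_sum,
    card_tuple_sum]
  have h1 : p + (k - p) - 1 = k - 1 := by omega
  have h2 : p + (p - 1) - 1 = 2 * (p - 1) := by omega
  rw [h1, h2, Nat.centralBinom]
  congr 1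
  rw [← Nat.choose_symm (by omega : k - p ≤ k - 1)]
  congr 1
  omega

lemma catalan_succ_le (n : ℕ) : catalan (n + 1) ≤ 4 * catalan n := by
  have h1 := succ_mul_catalan_eq_centralBinom n
  have h2 := succ_mul_catalan_eq_centralBinom (n + 1)
  have h3 := Nat.succ_mul_centralBinom_succ n
  have key : (n + 1) * ((n + 2) * catalan (n + 1)) = (n + 1) * ((2 * (2 * n + 1)) * catalan n) := by
    calc (n + 1) * ((n + 2) * catalan (n + 1)) = (n + 1) * Nat.centralBinom (n + 1) := by
          rw [← h2]
      _ = 2 * (2 * n + 1) * Nat.centralBinom n := h3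
      _ = 2 * (2 * n + 1) * ((n + 1) * catalan n) := by rw [← h1]
      _ = (n + 1) * ((2 * (2 * n + 1)) * catalan n) := by ring
  have key2 : (n + 2) * catalan (n + 1) = (2 * (2 * n + 1)) * catalan n :=
    Nat.eq_of_mul_eq_mul_left (by omega) key
  have : (n + 2) * catalan (n + 1) ≤ (n + 2) * (4 * catalan n) := by
    rw [key2]
    have : (2 * (2 * n + 1)) ≤ 4 * (n + 2) := by omega
    calc (2 * (2 * n + 1)) * catalan n ≤ 4 * (n + 2) * catalan n :=
          Nat.mul_le_mul_right _ this
      _ = (n + 2) * (4 * catalan n) := by ring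
  exact Nat.le_of_mul_le_mul_left this (by omega)

/-- The binomial transform of the Catalan numbers. -/
def catA (m : ℕ) : ℕ := ∑ n ∈ Finset.range (m + 1), m.choose n * catalan n

lemma catA_succ_le (m : ℕ) : catA (m + 1) ≤ 5 * catA m := by
  have expand : catA (m + 1)
      = 1 + ∑ n ∈ Finset.range (m + 1), (m.choose n + m.choose (n + 1)) * catalan (n + 1) := by
    rw [catA, Finset.sum_range_succ' (fun n => (m + 1).choose n * catalan n)]
    simp only [Nat.choose_zero_right, catalan_zero, mul_one, one_mul]
    rw [Finset.sum_congr rfl (fun n _ => by rw [Nat.choose_succ_succ] :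
      ∀ n ∈ Finset.range (m + 1),
        (m + 1).choose (n + 1) * catalan (n + 1) = (m.choose n + m.choose (n + 1)) * catalan (n + 1))]
    omega
  have S2eq : 1 + ∑ n ∈ Finset.range (m + 1), m.choose (n + 1) * catalan (n + 1) = catA m := by
    rw [Finset.sum_range_succ, Nat.choose_succ_self, zero_mul, add_zero, catA,
      Finset.sum_range_succ' (fun n => m.choose n * catalan n)]
    simp [add_comm]
  have S1le : ∑ n ∈ Finset.range (m + 1), m.choose n * catalan (n + 1) ≤ 4 * catA m := by
    rw [catA, Finset.mul_sum]
    refine Finset.sum_le_sum fun n _ => ?_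
    calc m.choose n * catalan (n + 1) ≤ m.choose n * (4 * catalan n) :=
          Nat.mul_le_mul_left _ (catalan_succ_le n)
      _ = 4 * (m.choose n * catalan n) := by ring
  calc catA (m + 1)
      = 1 + ∑ n ∈ Finset.range (m + 1), (m.choose n + m.choose (n + 1)) * catalan (n + 1) :=
        expand
    _ = (∑ n ∈ Finset.range (m + 1), m.choose n * catalan (n + 1))
        + (1 + ∑ n ∈ Finset.range (m + 1), m.choose (n + 1) * catalan (n + 1)) := by
        simp only [add_mul, Finset.sum_add_distrib]; ring
    _ ≤ 4 * catA m + catA m := by rw [S2eq]; exact Nat.add_le_add_right S1le _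
    _ = 5 * catA m := by ring

lemma catA_two : catA 2 = 5 := by
  simp [catA, Finset.sum_range_succ, catalan_zero, catalan_one, catalan_two]

lemma catA_le (m : ℕ) (hm : 2 ≤ m) : catA m ≤ 5 ^ (m - 1) := by
  induction m with
  | zero => omega
  | succ n ih =>
    rcases Nat.lt_or_ge n 2 with h | h
    · interval_cases n
      · omega
      · rw [catA_two]; norm_num
    · have := catA_succ_le n
      have hih := ih h
      have : catA (n + 1) ≤ 5 * 5 ^ (n - 1) := le_trans this (Nat.mul_le_mul_left 5 hih)
      calc catA (n + 1) ≤ 5 * 5 ^ (n - 1) := this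
        _ = 5 ^ (n + 1 - 1) := by
            rw [← pow_succ']
            congr 1
            omega

/-- Lezaud's combinatorial bound
`Σ_{p=1}^k (1/p) #{(ν,μ) : ν composition of k into p positive parts,
μ composition of p−1 into p non-negative parts} ≤ 5^{k−2}` for `k ≥ 3`. -/
theorem composition_count_bound (k : ℕ) (hk : 3 ≤ k) :
    ∑ p ∈ Finset.Icc 1 k, (1 / (p : ℝ)) *
      (Nat.card {νμ : (Fin p → ℕ) × (Fin p → ℕ) //
        (∀ i, 1 ≤ νμ.1 i) ∧ (∑ i, νμ.1 i) = k ∧ (∑ i, νμ.2 i) = p - 1} : ℝ)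
      ≤ (5 : ℝ) ^ (k - 2) := by
  have step : ∀ p ∈ Finset.Icc 1 k, (1 / (p : ℝ)) *
      (Nat.card {νμ : (Fin p → ℕ) × (Fin p → ℕ) //
        (∀ i, 1 ≤ νμ.1 i) ∧ (∑ i, νμ.1 i) = k ∧ (∑ i, νμ.2 i) = p - 1} : ℝ)
      = (((k - 1).choose (p - 1) * catalan (p - 1) : ℕ) : ℝ) := by
    intro p hp
    rw [Finset.mem_Icc] at hp
    rw [card_pairs p k hp.1 hp.2]
    have hcat : ((p : ℝ)) * (catalan (p - 1) : ℝ) = (Nat.centralBinom (p - 1) : ℝ) := by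
      have := succ_mul_catalan_eq_centralBinom (p - 1)
      have hp1 : p - 1 + 1 = p := by omega
      rw [hp1] at this
      exact_mod_cast congrArg (Nat.cast : ℕ → ℝ) this
    have hppos : (p : ℝ) ≠ 0 := Nat.cast_ne_zero.mpr (by omega)
    push_cast
    rw [← hcat]
    field_simp
  rw [Finset.sum_congr rfl step, ← Nat.cast_sum]
  have reindex : ∑ p ∈ Finset.Icc 1 k, (k - 1).choose (p - 1) * catalan (p - 1)
      = catA (k - 1) := by
    rw [catA]
    apply Finset.sum_nbij' (fun p => p - 1) (fun n => n + 1)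
    · intro p hp; rw [Finset.mem_Icc] at hp; rw [Finset.mem_range]; omega
    · intro n hn; rw [Finset.mem_range] at hn; rw [Finset.mem_Icc]; omega
    · intro p hp; rw [Finset.mem_Icc] at hp; omega
    · intro n _; omega
    · intro p _; rfl
  rw [reindex]
  have hb := catA_le (k - 1) (by omega)
  have : ((catA (k - 1) : ℕ) : ℝ) ≤ ((5 ^ (k - 1 - 1) : ℕ) : ℝ) := by exact_mod_cast hb
  calc ((catA (k - 1) : ℕ) : ℝ) ≤ ((5 ^ (k - 1 - 1) : ℕ) : ℝ) := this
    _ = (5 : ℝ) ^ (k - 2) := by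
        rw [show k - 1 - 1 = k - 2 from by omega]
        push_cast
        ring
end

section
/- Let X(t) be an irreducible continuous-time Markov chain on finite E with generator W, stationary π, and let A(t) = Σ_jumps a_{x→y} be a linear counting observable with bounded weights |a_{xy}| ≤ c. Set ⟨a⟩_π = Σ_{x≠y} π_x w_{xy} a_{xy}, ⟨a²⟩_π = Σ_{x≠y} π_x w_{xy} a_{xy}², ⟨k⟩_π = Σ_{x≠y} π_x w_{xy}, and assume the moment generating function bound E_π[e^{u(A(t) − t⟨a⟩_π)}] ≤ exp(t(⟨k⟩_π(e^{cu} − cu − 1) + (q⟨a²⟩_π u²/ε)(1 − 5cqu/ε)⁻¹)) for all 0 ≤ u < ε/(5cq). Then for every γ > 0, P_π(A(t)/t ≥ ⟨a⟩_π + γ) ≤ exp(−t γ² / (2(⟨k⟩_π c² + 2q⟨a²⟩_π/ε + max{c/3, 5cq/ε}·γ))). -/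
open MeasureTheory Real

private lemma hd1 (y : ℝ) : HasDerivAt (fun x : ℝ => (x - 1) * exp x + 1) (y * exp y) y := by
  have h := (((hasDerivAt_id y).sub_const 1).mul (Real.hasDerivAt_exp y)).add_const 1
  refine h.congr_deriv ?_
  simp only [id]; ring

private lemma aux1 : ∀ x : ℝ, 0 ≤ x → 0 ≤ (x - 1) * exp x + 1 := by
  intro x hx
  have hmono : MonotoneOn (fun x : ℝ => (x - 1) * exp x + 1) (Set.Ici 0) := by
    apply monotoneOn_of_deriv_nonneg (convex_Ici 0)
    · exact fun y _ => (hd1 y).continuousAt.continuousWithinAt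
    · exact fun y _ => (hd1 y).differentiableAt.differentiableWithinAt
    · intro y hy
      rw [(hd1 y).deriv]
      have hy0 : (0:ℝ) < y := by simpa using hy
      positivity
  have := hmono (Set.self_mem_Ici) hx hx
  simpa using this

private lemma hd2 (y : ℝ) : HasDerivAt (fun x : ℝ => (x - 2) * exp x + x + 2)
    ((y - 1) * exp y + 1) y := by
  have h := ((((hasDerivAt_id y).sub_const 2).mul (Real.hasDerivAt_exp y)).add
    (hasDerivAt_id y)).add_const 2
  refine h.congr_deriv ?_
  simp only [id]; ring

private lemma aux2 : ∀ x : ℝ, 0 ≤ x → 0 ≤ (x - 2) * exp x + x + 2 := by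
  intro x hx
  have hmono : MonotoneOn (fun x : ℝ => (x - 2) * exp x + x + 2) (Set.Ici 0) := by
    apply monotoneOn_of_deriv_nonneg (convex_Ici 0)
    · exact fun y _ => (hd2 y).continuousAt.continuousWithinAt
    · exact fun y _ => (hd2 y).differentiableAt.differentiableWithinAt
    · intro y hy
      rw [(hd2 y).deriv]
      exact aux1 y (le_of_lt (by simpa using hy))
  have := hmono (Set.self_mem_Ici) hx hx
  simp only [Real.exp_zero] at this
  nlinarith [this]

private lemma hd3 (y : ℝ) : HasDerivAt (fun x : ℝ => x ^ 2 / 2 - (exp x - x - 1) * (1 - x / 3))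
    (((y - 2) * exp y + y + 2) / 3) y := by
  have h := ((hasDerivAt_pow 2 y).div_const 2).sub
    ((((Real.hasDerivAt_exp y).sub (hasDerivAt_id y)).sub_const 1).mul
      (((hasDerivAt_id y).div_const 3).const_sub 1))
  refine h.congr_deriv ?_
  simp only [id, Pi.sub_apply]; ring

private lemma aux3 : ∀ x : ℝ, 0 ≤ x → (exp x - x - 1) * (1 - x / 3) ≤ x ^ 2 / 2 := by
  intro x hx
  have hmono : MonotoneOn (fun x : ℝ => x ^ 2 / 2 - (exp x - x - 1) * (1 - x / 3)) (Set.Ici 0) := by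
    apply monotoneOn_of_deriv_nonneg (convex_Ici 0)
    · exact fun y _ => (hd3 y).continuousAt.continuousWithinAt
    · exact fun y _ => (hd3 y).differentiableAt.differentiableWithinAt
    · intro y hy
      rw [(hd3 y).deriv]
      have := aux2 y (le_of_lt (by simpa using hy))
      linarith
  have := hmono (Set.self_mem_Ici) hx hx
  simp only [Real.exp_zero] at this
  nlinarith [this]

private lemma key_ineq (a2 K c q ε γ M V u : ℝ) (ha2 : 0 ≤ a2) (hK : 0 ≤ K) (hc : 0 < c)
    (hq : 0 < q) (hε : 0 < ε) (hγ : 0 < γ)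
    (hM1 : c / 3 ≤ M) (hM2 : 5 * c * q / ε ≤ M)
    (hVdef : V = K * c ^ 2 + 2 * q * a2 / ε)
    (hudef : u = γ / (V + 2 * M * γ)) :
    0 < u ∧ u < ε / (5 * c * q) ∧
      K * (exp (c * u) - c * u - 1) + q * a2 * u ^ 2 / ε * (1 - 5 * c * q * u / ε)⁻¹
        ≤ u * γ - γ ^ 2 / (2 * (V + M * γ)) := by
  have hM : 0 < M := lt_of_lt_of_le (by positivity) hM1
  have hV : 0 ≤ V := by rw [hVdef]; positivity
  have hS : 0 < V + 2 * M * γ := by positivity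
  have hu0 : 0 < u := by rw [hudef]; positivity
  have hMu : M * u ≤ 1 / 2 := by
    rw [hudef, mul_div_assoc', div_le_iff₀ hS]
    nlinarith
  have h1Mu : 0 < 1 - M * u := by linarith
  have hcu : 0 ≤ c * u := by positivity
  have hcu3 : c * u / 3 ≤ M * u := by nlinarith
  have h5u : 5 * c * q * u / ε ≤ M * u := by
    have := mul_le_mul_of_nonneg_right hM2 hu0.le
    calc 5 * c * q * u / ε = 5 * c * q / ε * u := by ring
    _ ≤ M * u := this
  have hub : u < ε / (5 * c * q) := by
    rw [lt_div_iff₀ (by positivity)]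
    have h1 : 5 * c * q * u ≤ ε / 2 := by
      have h2 : 5 * c * q * u / ε ≤ 1 / 2 := le_trans h5u hMu
      calc 5 * c * q * u = (5 * c * q * u / ε) * ε := by field_simp
      _ ≤ (1 / 2) * ε := mul_le_mul_of_nonneg_right h2 hε.le
      _ = ε / 2 := by ring
    linarith
  refine ⟨hu0, hub, ?_⟩
  have hexp0 : 0 ≤ exp (c * u) - c * u - 1 := by
    nlinarith [Real.add_one_le_exp (c * u)]
  have hE : exp (c * u) - c * u - 1 ≤ c ^ 2 * u ^ 2 / (2 * (1 - M * u)) := by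
    have h3 := aux3 (c * u) hcu
    rw [le_div_iff₀ (by positivity)]
    nlinarith [mul_le_mul_of_nonneg_left hcu3 hexp0]
  have hI : (1 - 5 * c * q * u / ε)⁻¹ ≤ (1 - M * u)⁻¹ := by
    apply inv_anti₀ h1Mu
    linarith
  have hterm2 : q * a2 * u ^ 2 / ε * (1 - 5 * c * q * u / ε)⁻¹
      ≤ q * a2 * u ^ 2 / ε * (1 - M * u)⁻¹ :=
    mul_le_mul_of_nonneg_left hI (by positivity)
  have hD : 0 < V + M * γ := by positivity
  have hcomb : K * (exp (c * u) - c * u - 1) + q * a2 * u ^ 2 / ε * (1 - 5 * c * q * u / ε)⁻¹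
      ≤ V / 2 * u ^ 2 / (1 - M * u) := by
    calc K * (exp (c * u) - c * u - 1) + q * a2 * u ^ 2 / ε * (1 - 5 * c * q * u / ε)⁻¹
        ≤ K * (c ^ 2 * u ^ 2 / (2 * (1 - M * u))) + q * a2 * u ^ 2 / ε * (1 - M * u)⁻¹ :=
          add_le_add (mul_le_mul_of_nonneg_left hE hK) hterm2
      _ = V / 2 * u ^ 2 / (1 - M * u) := by
          rw [hVdef]
          field_simp
  refine hcomb.trans (le_of_eq ?_)
  have h1Mu' : 1 - M * u = (V + M * γ) / (V + 2 * M * γ) := by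
    rw [hudef]
    field_simp
    ring
  rw [h1Mu', hudef]
  field_simp
  ring

/-- concentration bound from the moment generating function estimate via
Chernoff's bound. `m = ⟨a⟩_π`, `a2 = ⟨a²⟩_π`, `K = ⟨k⟩_π`, `q` the maximal escape rate,
`ε` the spectral gap. -/
theorem concentration_bound {Ω : Type*} [MeasurableSpace Ω] (ℙ : Measure Ω)
    [IsProbabilityMeasure ℙ] (At : Ω → ℝ) (hAt : Measurable At)
    (t m a2 K c q ε : ℝ) (ht : 0 < t) (ha2 : 0 ≤ a2) (hK : 0 ≤ K)
    (hc : 0 < c) (hq : 0 < q) (hε : 0 < ε)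
    (hint : ∀ u : ℝ, 0 ≤ u → u < ε / (5 * c * q) →
      Integrable (fun ω => exp (u * (At ω - t * m))) ℙ)
    (hmgf : ∀ u : ℝ, 0 ≤ u → u < ε / (5 * c * q) →
      ∫ ω, exp (u * (At ω - t * m)) ∂ℙ ≤
        exp (t * (K * (exp (c * u) - c * u - 1) +
          q * a2 * u ^ 2 / ε * (1 - 5 * c * q * u / ε)⁻¹))) :
    ∀ γ : ℝ, 0 < γ →
      ℙ {ω | m + γ ≤ At ω / t} ≤
        ENNReal.ofReal (exp (-(t * γ ^ 2 /
          (2 * (K * c ^ 2 + 2 * q * a2 / ε + max (c / 3) (5 * c * q / ε) * γ))))) := by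
  intro γ hγ
  obtain ⟨hu0, hub, hfu⟩ := key_ineq a2 K c q ε γ (max (c / 3) (5 * c * q / ε))
    (K * c ^ 2 + 2 * q * a2 / ε)
    (γ / (K * c ^ 2 + 2 * q * a2 / ε + 2 * max (c / 3) (5 * c * q / ε) * γ))
    ha2 hK hc hq hε hγ (le_max_left _ _) (le_max_right _ _) rfl rfl
  set u := γ / (K * c ^ 2 + 2 * q * a2 / ε + 2 * max (c / 3) (5 * c * q / ε) * γ) with hudef
  clear hudef
  clear_value u
  have hset : {ω | m + γ ≤ At ω / t} = {ω | t * γ ≤ At ω - t * m} := by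
    ext ω
    simp only [Set.mem_setOf_eq]
    rw [le_div_iff₀ ht]
    constructor <;> intro h <;> nlinarith
  have hcher := ProbabilityTheory.measure_ge_le_exp_mul_mgf
    (X := fun ω => At ω - t * m) (μ := ℙ) (t := u) (t * γ) hu0.le (hint u hu0.le hub)
  have hmgf' : ProbabilityTheory.mgf (fun ω => At ω - t * m) ℙ u
      ≤ exp (t * (K * (exp (c * u) - c * u - 1) +
        q * a2 * u ^ 2 / ε * (1 - 5 * c * q * u / ε)⁻¹)) :=
    hmgf u hu0.le hub
  have hreal : (ℙ {ω | t * γ ≤ At ω - t * m}).toReal ≤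
      exp (-(t * γ ^ 2 /
        (2 * (K * c ^ 2 + 2 * q * a2 / ε + max (c / 3) (5 * c * q / ε) * γ)))) := by
    refine hcher.trans ?_
    have h1 : exp (-u * (t * γ)) * ProbabilityTheory.mgf (fun ω => At ω - t * m) ℙ u
        ≤ exp (-u * (t * γ)) * exp (t * (K * (exp (c * u) - c * u - 1) +
          q * a2 * u ^ 2 / ε * (1 - 5 * c * q * u / ε)⁻¹)) :=
      mul_le_mul_of_nonneg_left hmgf' (le_of_lt (Real.exp_pos _))
    refine h1.trans ?_
    rw [← Real.exp_add]
    apply Real.exp_le_exp.2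
    have h2 := mul_le_mul_of_nonneg_left hfu ht.le
    have h3 : t * (u * γ - γ ^ 2 /
        (2 * (K * c ^ 2 + 2 * q * a2 / ε + max (c / 3) (5 * c * q / ε) * γ)))
        = u * (t * γ) - t * γ ^ 2 /
        (2 * (K * c ^ 2 + 2 * q * a2 / ε + max (c / 3) (5 * c * q / ε) * γ)) := by ring
    linarith
  calc ℙ {ω | m + γ ≤ At ω / t}
      = ENNReal.ofReal ((ℙ {ω | t * γ ≤ At ω - t * m}).toReal) := by
        rw [hset, ENNReal.ofReal_toReal (measure_ne_top _ _)]
    _ ≤ ENNReal.ofReal (exp (-(t * γ ^ 2 /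
          (2 * (K * c ^ 2 + 2 * q * a2 / ε + max (c / 3) (5 * c * q / ε) * γ))))) :=
        ENNReal.ofReal_le_ofReal hreal
end

section
/- In the setting of the previous statement, the asymptotic variance rate lim_{t→∞} σ²_π(t)/t exists and equals ⟨a²⟩_π − 2⟨π| W'₀ W⁻¹ W'₀ |1⟩, and the short-time rate satisfies lim_{t→0} σ²_π(t)/t = ⟨a²⟩_π. -/
open Matrix Filter NormedSpace

private lemma mul_vecMulVec' {E : Type*} [Fintype E] (A : Matrix E E ℝ) (u v : E → ℝ) :
    A * vecMulVec u v = vecMulVec (A *ᵥ u) v := by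
  ext i j
  simp [Matrix.mul_apply, vecMulVec_apply, Matrix.mulVec, dotProduct, Finset.sum_mul, mul_assoc]

private lemma vecMulVec_mul' {E : Type*} [Fintype E] (A : Matrix E E ℝ) (u v : E → ℝ) :
    vecMulVec u v * A = vecMulVec u (v ᵥ* A) := by
  ext i j
  simp [Matrix.mul_apply, vecMulVec_apply, Matrix.vecMul, dotProduct, Finset.mul_sum, mul_assoc]

private lemma vecMul_vecMulVec' {E : Type*} [Fintype E] (x u v : E → ℝ) :
    x ᵥ* vecMulVec u v = (x ⬝ᵥ u) • v := by
  ext j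
  simp only [Matrix.vecMul, vecMulVec_apply, dotProduct, Pi.smul_apply, smul_eq_mul,
    Finset.sum_mul]
  exact Finset.sum_congr rfl fun i _ => by ring

private lemma key_pseudoinverse {E : Type*} [Fintype E] [DecidableEq E]
    (W : Matrix E E ℝ) (π : E → ℝ)
    (hrow : W *ᵥ (fun _ => 1) = 0)
    (hπ1 : ∑ x, π x = 1)
    (hstat : π ᵥ* W = 0)
    (M : Matrix E E ℝ)
    (hM : (W + vecMulVec (fun _ => 1) π) * M = 1 ∧ M * (W + vecMulVec (fun _ => 1) π) = 1) :
    W * ((M - vecMulVec (fun _ => 1) π) * (M - vecMulVec (fun _ => 1) π))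
      = M - vecMulVec (fun _ => 1) π := by
  set V : Matrix E E ℝ := vecMulVec (fun _ => 1) π with hV
  have hπ1' : π ⬝ᵥ (fun _ => (1:ℝ)) = 1 := by simpa [dotProduct] using hπ1
  have hπV : π ᵥ* V = π := by rw [hV, vecMul_vecMulVec', hπ1', one_smul]
  have hπM : π ᵥ* M = π := by
    have h1 : π ᵥ* (W + V) = π := by rw [Matrix.vecMul_add, hstat, hπV, zero_add]
    calc π ᵥ* M = (π ᵥ* (W + V)) ᵥ* M := by rw [h1]
      _ = π ᵥ* ((W + V) * M) := by rw [Matrix.vecMul_vecMul]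
      _ = π := by rw [hM.1, Matrix.vecMul_one]
  have hWV : W * V = 0 := by
    rw [hV, mul_vecMulVec', hrow]; ext i j; simp [vecMulVec_apply]
  have hWM : W * M = 1 - V := by
    have := hM.1
    rw [Matrix.add_mul] at this
    have hVM : V * M = V := by rw [hV, vecMulVec_mul', hπM]
    rw [hVM] at this
    linear_combination (norm := abel) this
  have hπWinv : π ᵥ* (M - V) = 0 := by
    rw [Matrix.vecMul_sub, hπM, hπV, sub_self]
  have hVWinv : V * (M - V) = 0 := by
    rw [hV, vecMulVec_mul', hπWinv]; ext i j; simp [vecMulVec_apply]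
  have hWWinv : W * (M - V) = 1 - V := by
    rw [Matrix.mul_sub, hWM, hWV, sub_zero]
  calc W * ((M - V) * (M - V)) = (W * (M - V)) * (M - V) := by rw [Matrix.mul_assoc]
    _ = (1 - V) * (M - V) := by rw [hWWinv]
    _ = M - V := by rw [Matrix.sub_mul, Matrix.one_mul, hVWinv, sub_zero]

/-- with `σ²_π(t) = t⟨a²⟩_π + 2⟨π|W'₀((e^{tW}−I)(W⁻¹)² − tW⁻¹)W'₀|1⟩`,
the asymptotic variance rate is `lim_{t→∞} σ²_π(t)/t = ⟨a²⟩_π − 2⟨π|W'₀W⁻¹W'₀|1⟩` and the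
short-time rate is `lim_{t→0} σ²_π(t)/t = ⟨a²⟩_π`. -/
theorem asymptotic_and_short_time_variance {E : Type*} [Fintype E] [DecidableEq E] [Nonempty E]
    (W : Matrix E E ℝ) (π : E → ℝ) (a : E → E → ℝ)
    (hoff : ∀ x y, x ≠ y → 0 ≤ W x y)
    (hrow : W *ᵥ (fun _ => 1) = 0)
    (hπpos : ∀ x, 0 < π x) (hπ1 : ∑ x, π x = 1)
    (hstat : π ᵥ* W = 0)
    (M : Matrix E E ℝ)
    (hM : (W + vecMulVec (fun _ => 1) π) * M = 1 ∧ M * (W + vecMulVec (fun _ => 1) π) = 1)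
    (hergodic : Tendsto (fun t : ℝ => NormedSpace.exp (t • W)) atTop
      (nhds (vecMulVec (fun _ => 1) π))) :
    let W' : Matrix E E ℝ := Matrix.of (fun x y => if x = y then 0 else a x y * W x y)
    let Winv : Matrix E E ℝ := M - vecMulVec (fun _ => 1) π
    let a2 : ℝ := ∑ x, ∑ y ∈ Finset.univ.filter (fun y => y ≠ x), π x * W x y * a x y ^ 2
    let σ2 : ℝ → ℝ := fun t =>
      t * a2 + 2 * (π ⬝ᵥ (W' * ((NormedSpace.exp (t • W) - 1) * (Winv * Winv) - t • Winv)
        * W') *ᵥ (fun _ => 1))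
    Tendsto (fun t => σ2 t / t) atTop
        (nhds (a2 - 2 * (π ⬝ᵥ (W' * Winv * W') *ᵥ (fun _ => 1)))) ∧
      Tendsto (fun t => σ2 t / t) (nhdsWithin 0 {t : ℝ | 0 < t}) (nhds a2) := by
  intro W' Winv a2 σ2
  letI : SeminormedRing (Matrix E E ℝ) := Matrix.linftyOpSemiNormedRing
  letI : NormedRing (Matrix E E ℝ) := Matrix.linftyOpNormedRing
  letI : NormedAlgebra ℝ (Matrix E E ℝ) := Matrix.linftyOpNormedAlgebra
  have hkey : W * (Winv * Winv) = Winv :=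
    key_pseudoinverse W π hrow hπ1 hstat M hM
  set Q : Matrix E E ℝ := Winv * Winv with hQ
  set g : ℝ := π ⬝ᵥ (W' * Winv * W') *ᵥ (fun _ => 1) with hg
  let Lf : Matrix E E ℝ →ₗ[ℝ] ℝ :=
    { toFun := fun A => π ⬝ᵥ (W' * (A * Q) * W') *ᵥ (fun _ => 1)
      map_add' := fun A B => by
        simp [Matrix.add_mul, Matrix.mul_add, Matrix.add_mulVec, dotProduct_add]
      map_smul' := fun c A => by
        simp [Matrix.smul_mul, Matrix.mul_smul, Matrix.smul_mulVec, dotProduct_smul] }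
  let L : Matrix E E ℝ →L[ℝ] ℝ := LinearMap.toContinuousLinearMap Lf
  have hLf : ∀ A : Matrix E E ℝ, Lf A = π ⬝ᵥ (W' * (A * Q) * W') *ᵥ (fun _ => 1) := fun _ => rfl
  have hLcoe : ⇑L = ⇑Lf := LinearMap.coe_toContinuousLinearMap' Lf
  have hLW : Lf W = g := by rw [hLf, hkey, hg]
  have hσ : ∀ t : ℝ, σ2 t = t * a2 + 2 * Lf (exp (t • W) - 1) - 2 * (t * g) := by
    intro t
    have hdist : W' * ((exp (t • W) - 1) * Q - t • Winv) * W'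
        = W' * ((exp (t • W) - 1) * Q) * W' - t • (W' * Winv * W') := by
      rw [Matrix.mul_sub, Matrix.sub_mul]
      congr 1
      rw [Matrix.mul_smul, Matrix.smul_mul]
    show t * a2 + 2 * (π ⬝ᵥ (W' * ((exp (t • W) - 1) * Q - t • Winv) * W') *ᵥ (fun _ => 1))
      = _
    rw [hdist, Matrix.sub_mulVec, dotProduct_sub, Matrix.smul_mulVec, dotProduct_smul,
      hLf, hg]
    simp only [smul_eq_mul]
    ring
  constructor
  · -- t → ∞
    have hc : Tendsto (fun t : ℝ => Lf (exp (t • W) - 1)) atTop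
        (nhds (Lf (vecMulVec (fun _ => 1) π - 1))) := by
      have h1 : Tendsto (fun t : ℝ => exp (t • W) - 1) atTop
          (nhds (vecMulVec (fun _ => 1) π - 1)) := hergodic.sub tendsto_const_nhds
      have := (L.continuous.tendsto _).comp h1
      rw [hLcoe] at this
      exact this
    have hL0 : Tendsto (fun t : ℝ => Lf (exp (t • W) - 1) / t) atTop (nhds 0) :=
      hc.div_atTop tendsto_id
    have hmain : Tendsto (fun t : ℝ => a2 + 2 * (Lf (exp (t • W) - 1) / t) - 2 * g) atTop
        (nhds (a2 + 2 * 0 - 2 * g)) :=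
      (tendsto_const_nhds.add (hL0.const_mul 2)).sub tendsto_const_nhds
    have heq : (fun t : ℝ => a2 + 2 * (Lf (exp (t • W) - 1) / t) - 2 * g)
        =ᶠ[atTop] (fun t => σ2 t / t) := by
      filter_upwards [eventually_gt_atTop (0 : ℝ)] with t ht
      rw [hσ t]
      field_simp
    simpa using hmain.congr' heq
  · -- t → 0⁺
    have hD : HasDerivAt (fun t : ℝ => exp (t • W)) W 0 := by
      have := hasDerivAt_exp_smul_const' (𝕂 := ℝ) W (0 : ℝ)
      simp only [zero_smul, exp_zero, mul_one] at this
      exact this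
    have hD1 : HasDerivAt (fun t : ℝ => exp (t • W) - 1) W 0 := hD.sub_const 1
    have hc : HasDerivAt (fun t : ℝ => Lf (exp (t • W) - 1)) (Lf W) 0 := by
      have := L.hasFDerivAt.comp_hasDerivAt 0 hD1
      rw [hLcoe] at this
      exact this
    have hc0 : Lf (exp ((0 : ℝ) • W) - 1) = 0 := by
      simp [exp_zero]
    have hslope := hasDerivAt_iff_tendsto_slope.mp hc
    have hmono : nhdsWithin (0 : ℝ) {t : ℝ | 0 < t} ≤ nhdsWithin 0 {(0 : ℝ)}ᶜ :=
      nhdsWithin_mono 0 (fun t ht => ne_of_gt ht)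
    have h2 : Tendsto (fun t : ℝ => Lf (exp (t • W) - 1) / t)
        (nhdsWithin 0 {t : ℝ | 0 < t}) (nhds (Lf W)) := by
      refine (hslope.mono_left hmono).congr fun t => ?_
      simp [slope_def_field, hc0]
    have hmain : Tendsto (fun t : ℝ => a2 + 2 * (Lf (exp (t • W) - 1) / t) - 2 * g)
        (nhdsWithin 0 {t : ℝ | 0 < t}) (nhds (a2 + 2 * Lf W - 2 * g)) :=
      (tendsto_const_nhds.add (h2.const_mul 2)).sub tendsto_const_nhds
    have heq : (fun t : ℝ => a2 + 2 * (Lf (exp (t • W) - 1) / t) - 2 * g)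
        =ᶠ[nhdsWithin 0 {t : ℝ | 0 < t}] (fun t => σ2 t / t) := by
      filter_upwards [self_mem_nhdsWithin] with t ht
      have ht' : t ≠ 0 := ne_of_gt ht
      rw [hσ t]
      field_simp
    have := hmain.congr' heq
    simpa [hLW] using this
end
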